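/- Let H=(V,E,w) be a directed hypergraph with weighted-degree vertex weights ω, suppose ω_u > 0 for every u ∈ V and |V| ≥ 2. Then there exists a nonempty proper subset S ⊂ V with ω(S) ≤ ω(V)/2 such that φ(S) ≤ 2·√γ₂. In particular, φ_H ≤ 2√γ₂, where φ_H := min{ φ(S) : ∅ ≠ S ⊂ V, ω(S) ≤ ω(V)/2 }. -/

import Mathlib

open Finset
open scoped Classical

noncomputable section

structure DirHyp (V E : Type) [Fintype V] [Fintype E] where
  Tl : E → Finset V
  Hd : E → Finset V
  w : E → ℝ
  Tl_ne : ∀ e, (Tl e).Nonempty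
  Hd_ne : ∀ e, (Hd e).Nonempty
  w_nonneg : ∀ e, 0 ≤ w e

variable {V E : Type} [Fintype V] [DecidableEq V] [Fintype E]

/-- Discrepancy of edge `e` w.r.t. density `f`. -/
def disc (G : DirHyp V E) (f : V → ℝ) (e : E) : ℝ :=
  (G.Tl e).sup' (G.Tl_ne e) f - (G.Hd e).inf' (G.Hd_ne e) f

/-- Weighted degree of vertex `u`. -/
def vw (G : DirHyp V E) (u : V) : ℝ :=
  ∑ e : E, if u ∈ G.Tl e ∪ G.Hd e then G.w e else 0

/-- Total weight of a vertex subset. -/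
def wS (G : DirHyp V E) (S : Finset V) : ℝ := ∑ u ∈ S, vw G u

/-- Discrepancy ratio. -/
def discRatio (G : DirHyp V E) (f : V → ℝ) : ℝ :=
  (∑ e : E, G.w e * (max (disc G f e) 0) ^ 2) / (∑ u : V, vw G u * (f u) ^ 2)

/-- `γ₂`. -/
def gamma2 (G : DirHyp V E) : ℝ :=
  sInf {x : ℝ | ∃ f : V → ℝ, f ≠ 0 ∧ (∑ u : V, vw G u * f u) = 0 ∧ x = discRatio G f}

def outCut (G : DirHyp V E) (S : Finset V) : Finset E :=
  Finset.univ.filter fun e => (G.Tl e ∩ S).Nonempty ∧ (G.Hd e ∩ Sᶜ).Nonempty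

def inCut (G : DirHyp V E) (S : Finset V) : Finset E :=
  Finset.univ.filter fun e => (G.Tl e ∩ Sᶜ).Nonempty ∧ (G.Hd e ∩ S).Nonempty

def phiPlus (G : DirHyp V E) (S : Finset V) : ℝ := (∑ e ∈ outCut G S, G.w e) / wS G S

def phiMinus (G : DirHyp V E) (S : Finset V) : ℝ := (∑ e ∈ inCut G S, G.w e) / wS G S

def phi (G : DirHyp V E) (S : Finset V) : ℝ := min (phiPlus G S) (phiMinus G S)

lemma vw_nonneg (G : DirHyp V E) (u : V) : 0 ≤ vw G u := by
  apply Finset.sum_nonneg; intro e _; split <;> simp [G.w_nonneg e]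

lemma wS_nonneg (G : DirHyp V E) (S : Finset V) : 0 ≤ wS G S :=
  Finset.sum_nonneg fun u _ => vw_nonneg G u

lemma wS_mono (G : DirHyp V E) {S T : Finset V} (h : S ⊆ T) : wS G S ≤ wS G T :=
  Finset.sum_le_sum_of_subset_of_nonneg h fun u _ _ => vw_nonneg G u

/-- swap lemma -/
lemma vw_swap (G : DirHyp V E) (φ : V → ℝ) :
    ∑ u : V, vw G u * φ u = ∑ e : E, G.w e * ∑ u ∈ G.Tl e ∪ G.Hd e, φ u := by
  simp only [vw, Finset.sum_mul, Finset.mul_sum]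
  rw [Finset.sum_comm]
  congr 1; ext e
  simp only [ite_mul, zero_mul]
  rw [Finset.sum_ite_mem, Finset.univ_inter]

/-- sup'/inf' helpers -/
lemma sup'_shift {s : Finset V} (hs : s.Nonempty) (p : V → ℝ) (c : ℝ) :
    s.sup' hs (fun u => p u - c) = s.sup' hs p - c := by
  apply le_antisymm
  · apply Finset.sup'_le; intro u hu; simp [Finset.le_sup' p hu]
  · rw [sub_le_iff_le_add]
    apply Finset.sup'_le; intro u hu
    have := Finset.le_sup' (fun u => p u - c) hu
    linarith
lemma inf'_shift {s : Finset V} (hs : s.Nonempty) (p : V → ℝ) (c : ℝ) :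
    s.inf' hs (fun u => p u - c) = s.inf' hs p - c := by
  apply le_antisymm
  · rw [le_sub_iff_add_le]
    apply Finset.le_inf'; intro u hu
    have := Finset.inf'_le (fun u => p u - c) hu
    linarith
  · apply Finset.le_inf'; intro u hu
    have h2 : s.inf' hs p ≤ p u := Finset.inf'_le p hu
    linarith

set_option linter.unusedSectionVars false
set_option maxHeartbeats 1000000

lemma sup'_pos_part {s : Finset V} (hs : s.Nonempty) (p : V → ℝ) :
    s.sup' hs (fun u => max (p u) 0) = max (s.sup' hs p) 0 := by
  apply le_antisymm
  · apply Finset.sup'_le; intro u hu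
    exact max_le_max (Finset.le_sup' p hu) le_rfl
  · obtain ⟨u, hu, hequ⟩ := Finset.exists_mem_eq_sup' hs p
    rw [hequ]
    calc max (p u) 0 ≤ _ := Finset.le_sup' (fun u => max (p u) 0) hu

lemma inf'_pos_part {s : Finset V} (hs : s.Nonempty) (p : V → ℝ) :
    s.inf' hs (fun u => max (p u) 0) = max (s.inf' hs p) 0 := by
  apply le_antisymm
  · obtain ⟨u, hu, hequ⟩ := Finset.exists_mem_eq_inf' hs p
    rw [hequ]
    exact Finset.inf'_le (fun u => max (p u) 0) hu
  · apply Finset.le_inf'; intro u hu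
    exact max_le_max (Finset.inf'_le p hu) le_rfl

lemma sup'_neg_part {s : Finset V} (hs : s.Nonempty) (p : V → ℝ) :
    s.sup' hs (fun u => max (-p u) 0) = max (-(s.inf' hs p)) 0 := by
  apply le_antisymm
  · apply Finset.sup'_le; intro u hu
    exact max_le_max (neg_le_neg (Finset.inf'_le p hu)) le_rfl
  · obtain ⟨u, hu, hequ⟩ := Finset.exists_mem_eq_inf' hs p
    rw [hequ]
    exact Finset.le_sup' (fun u => max (-p u) 0) hu

lemma inf'_neg_part {s : Finset V} (hs : s.Nonempty) (p : V → ℝ) :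
    s.inf' hs (fun u => max (-p u) 0) = max (-(s.sup' hs p)) 0 := by
  apply le_antisymm
  · obtain ⟨u, hu, hequ⟩ := Finset.exists_mem_eq_sup' hs p
    rw [hequ]
    exact Finset.inf'_le (fun u => max (-p u) 0) hu
  · apply Finset.le_inf'; intro u hu
    exact max_le_max (neg_le_neg (Finset.le_sup' p hu)) le_rfl

/-- per-edge splitting inequality -/
lemma split_sq (a b : ℝ) :
    (max (max a 0 - max b 0) 0)^2 + (max (max (-b) 0 - max (-a) 0) 0)^2
      ≤ (max (a - b) 0)^2 := by
  rcases le_total a b with hab | hab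
  · have h1 : max a 0 ≤ max b 0 := max_le_max hab le_rfl
    have h2 : max (-b) 0 ≤ max (-a) 0 := max_le_max (neg_le_neg hab) le_rfl
    rw [max_eq_right (by linarith : max a 0 - max b 0 ≤ 0),
      max_eq_right (by linarith : max (-b) 0 - max (-a) 0 ≤ 0)]
    have : (0:ℝ)^2 + (0:ℝ)^2 = 0 := by norm_num
    rw [this]
    positivity
  · rw [max_eq_left (by linarith : (0:ℝ) ≤ a - b)]
    rcases le_total 0 b with hb | hb
    · have ha : (0:ℝ) ≤ a := le_trans hb hab
      rw [max_eq_left ha, max_eq_left hb,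
        max_eq_right (by linarith : -b ≤ (0:ℝ)), max_eq_right (by linarith : -a ≤ (0:ℝ)),
        max_eq_left (by linarith : (0:ℝ) ≤ a - b)]
      norm_num
    · rcases le_total a 0 with ha | ha
      · rw [max_eq_right ha, max_eq_right hb,
          max_eq_left (by linarith : (0:ℝ) ≤ -b), max_eq_left (by linarith : (0:ℝ) ≤ -a),
          max_eq_left (by linarith : (0:ℝ) ≤ -b - -a)]
        norm_num
        nlinarith
      · rw [max_eq_left ha, max_eq_right hb,
          max_eq_left (by linarith : (0:ℝ) ≤ -b), max_eq_right (by linarith : -a ≤ (0:ℝ)),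
          max_eq_left (by linarith : (0:ℝ) ≤ a - 0), max_eq_left (by linarith : (0:ℝ) ≤ -b - 0)]
        nlinarith [mul_nonneg (neg_nonneg.mpr hb) ha]


open Set MeasureTheory

lemma indIio_int (a : ℝ) :
    IntegrableOn (fun t => Set.indicator (Set.Iio a) (fun _ => (1:ℝ)) t) (Set.Ioi 0) := by
  rw [IntegrableOn, MeasureTheory.integrable_indicator_iff measurableSet_Iio]
  refine (integrableOn_const_iff (C := (1:ℝ)) (by simp)).mpr (Or.inr ?_)
  rw [MeasureTheory.Measure.restrict_apply measurableSet_Iio]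
  have : Set.Iio a ∩ Set.Ioi 0 = Set.Ioo 0 a := by ext x; simp [and_comm]
  rw [this, Real.volume_Ioo]
  exact ENNReal.ofReal_lt_top

lemma indIio_val (a : ℝ) (ha : 0 ≤ a) :
    ∫ t in Set.Ioi (0:ℝ), Set.indicator (Set.Iio a) (fun _ => (1:ℝ)) t = a := by
  rw [MeasureTheory.setIntegral_indicator measurableSet_Iio]
  rw [MeasureTheory.setIntegral_const]
  have : Set.Ioi 0 ∩ Set.Iio a = Set.Ioo 0 a := rfl
  rw [this, measureReal_def, Real.volume_Ioo, smul_eq_mul, mul_one, sub_zero, ENNReal.toReal_ofReal ha]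

lemma indIoo_int (a b : ℝ) :
    IntegrableOn (fun t => Set.indicator (Set.Ioo a b) (fun _ => (1:ℝ)) t) (Set.Ioi 0) := by
  rw [IntegrableOn, MeasureTheory.integrable_indicator_iff measurableSet_Ioo]
  refine (integrableOn_const_iff (C := (1:ℝ)) (by simp)).mpr (Or.inr ?_)
  refine lt_of_le_of_lt (MeasureTheory.Measure.restrict_le_self _) ?_
  rw [Real.volume_Ioo]; exact ENNReal.ofReal_lt_top

lemma indIoo_val (a : ℝ) (ha : 0 ≤ a) :
    ∫ t in Set.Ioi (0:ℝ), Set.indicator (Set.Ioo 0 a) (fun _ => (1:ℝ)) t = a := by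
  rw [MeasureTheory.setIntegral_indicator measurableSet_Ioo]
  rw [MeasureTheory.setIntegral_const]
  have : Set.Ioi 0 ∩ Set.Ioo 0 a = Set.Ioo 0 a := by ext x; simp
  rw [this, measureReal_def, Real.volume_Ioo, smul_eq_mul, mul_one, sub_zero, ENNReal.toReal_ofReal ha]

lemma indIco_int (a b : ℝ) :
    IntegrableOn (fun t => Set.indicator (Set.Ico a b) (fun _ => (1:ℝ)) t) (Set.Ioi 0) := by
  rw [IntegrableOn, MeasureTheory.integrable_indicator_iff measurableSet_Ico]
  refine (integrableOn_const_iff (C := (1:ℝ)) (by simp)).mpr (Or.inr ?_)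
  refine lt_of_le_of_lt (MeasureTheory.Measure.restrict_le_self _) ?_
  rw [Real.volume_Ico]; exact ENNReal.ofReal_lt_top

lemma indIco_val (a b : ℝ) :
    ∫ t in Set.Ioi (0:ℝ), Set.indicator (Set.Ico a b) (fun _ => (1:ℝ)) t ≤ max (b - a) 0 := by
  rw [MeasureTheory.setIntegral_indicator measurableSet_Ico]
  rw [MeasureTheory.setIntegral_const, smul_eq_mul, mul_one]
  have h1 : volume (Set.Ioi 0 ∩ Set.Ico a b) ≤ volume (Set.Ico a b) :=
    measure_mono Set.inter_subset_right
  have h2 : (volume (Set.Ioi 0 ∩ Set.Ico a b)).toReal ≤ (volume (Set.Ico a b)).toReal := by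
    apply ENNReal.toReal_mono _ h1
    rw [Real.volume_Ico]; exact ENNReal.ofReal_ne_top
  refine le_trans h2 ?_
  rw [Real.volume_Ico]
  rcases le_total (b - a) 0 with hba | hba
  · rw [ENNReal.ofReal_eq_zero.mpr hba]; simp [le_max_right]
  · rw [ENNReal.toReal_ofReal hba]; exact le_max_left _ _

lemma sq_le_sq_of_nonneg {a b : ℝ} (ha : 0 ≤ a) (hab : a ≤ b) : a^2 ≤ b^2 := by nlinarith

lemma sweep (G : DirHyp V E) (h : V → ℝ) (hh : ∀ u, 0 ≤ h u)
    (A B : E → ℝ) (hA0 : ∀ e, 0 ≤ A e) (hB0 : ∀ e, 0 ≤ B e)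
    (hA2 : ∀ e, (A e)^2 ≤ ∑ u ∈ G.Tl e ∪ G.Hd e, (h u)^2)
    (hB2 : ∀ e, (B e)^2 ≤ ∑ u ∈ G.Tl e ∪ G.Hd e, (h u)^2)
    (cut : Finset V → Finset E)
    (hcut : ∀ t : ℝ, 0 < t → ∀ e : E,
      (e ∈ cut (Finset.univ.filter (fun u => t < (h u)^2)) ↔ (B e)^2 ≤ t ∧ t < (A e)^2))
    (hD : 0 < ∑ u : V, vw G u * (h u)^2) :
    ∃ S : Finset V, S.Nonempty ∧ (∀ u ∈ S, 0 < h u) ∧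
      (∑ e ∈ cut S, G.w e)
        ≤ 2 * Real.sqrt ((∑ e : E, G.w e * (max (A e - B e) 0)^2)
              / (∑ u : V, vw G u * (h u)^2)) * wS G S := by
  set D := ∑ u : V, vw G u * (h u)^2 with hDdef
  set N := ∑ e : E, G.w e * (max (A e - B e) 0)^2 with hNdef
  set θ := 2 * Real.sqrt (N / D) with hθdef
  have hN0 : 0 ≤ N := Finset.sum_nonneg fun e _ => mul_nonneg (G.w_nonneg e) (sq_nonneg _)
  have hθ0 : 0 ≤ θ := by positivity
  by_contra hcon
  have key : ∀ S : Finset V, S.Nonempty → (∀ u ∈ S, 0 < h u) →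
      θ * wS G S < ∑ e ∈ cut S, G.w e := by
    intro S h1 h2
    by_contra h3
    push_neg at h3
    exact hcon ⟨S, h1, h2, by linarith⟩
  -- support
  have hex : ∃ u : V, 0 < h u := by
    by_contra hs
    push_neg at hs
    have hz : ∀ u : V, h u = 0 := fun u => le_antisymm (hs u) (hh u)
    have : D = 0 := by
      rw [hDdef]; apply Finset.sum_eq_zero; intro u _; simp [hz u]
    linarith
  obtain ⟨u₀, hu₀⟩ := hex
  set M := (h u₀)^2 with hMdef
  have hM : 0 < M := by positivity
  set supp := Finset.univ.filter (fun u => 0 < h u) with hsuppdef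
  set F := supp.powerset.filter (fun S => S.Nonempty) with hFdef
  have hFne : F.Nonempty := by
    refine ⟨{u₀}, ?_⟩
    rw [hFdef, Finset.mem_filter, Finset.mem_powerset]
    exact ⟨by simp [hsuppdef, Finset.singleton_subset_iff, hu₀], ⟨u₀, Finset.mem_singleton_self u₀⟩⟩
  set δ := F.inf' hFne (fun S => (∑ e ∈ cut S, G.w e) - θ * wS G S) with hδdef
  have hδ : 0 < δ := by
    rw [hδdef, Finset.lt_inf'_iff]
    intro S hS
    rw [hFdef, Finset.mem_filter, Finset.mem_powerset] at hS
    have h2 : ∀ u ∈ S, 0 < h u := by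
      intro u hu
      have := hS.1 hu
      rw [hsuppdef, Finset.mem_filter] at this
      exact this.2
    have := key S hS.2 h2
    linarith
  -- pointwise inequality
  have key2 : ∀ t ∈ Set.Ioi (0:ℝ),
      θ * (∑ u : V, vw G u * Set.indicator (Set.Iio ((h u)^2)) (fun _ => (1:ℝ)) t)
        + δ * Set.indicator (Set.Ioo (0:ℝ) M) (fun _ => (1:ℝ)) t
      ≤ ∑ e : E, G.w e * Set.indicator (Set.Ico ((B e)^2) ((A e)^2)) (fun _ => (1:ℝ)) t := by
    intro t ht
    rw [Set.mem_Ioi] at ht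
    set St := Finset.univ.filter (fun u => t < (h u)^2) with hStdef
    have hGsum : (∑ u : V, vw G u * Set.indicator (Set.Iio ((h u)^2)) (fun _ => (1:ℝ)) t)
        = wS G St := by
      rw [wS, hStdef, Finset.sum_filter]
      apply Finset.sum_congr rfl
      intro u _
      by_cases hc : t < (h u)^2 <;> simp [Set.indicator_apply, Set.mem_Iio, hc]
    have hFsum : (∑ e : E, G.w e * Set.indicator (Set.Ico ((B e)^2) ((A e)^2)) (fun _ => (1:ℝ)) t)
        = ∑ e ∈ cut St, G.w e := by
      rw [← Finset.sum_filter_add_sum_filter_not Finset.univ (fun e => e ∈ cut St)]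
      have h1 : ∀ e ∈ Finset.univ.filter (fun e => e ∈ cut St),
          G.w e * Set.indicator (Set.Ico ((B e)^2) ((A e)^2)) (fun _ => (1:ℝ)) t = G.w e := by
        intro e he
        rw [Finset.mem_filter] at he
        have := (hcut t ht e).mp he.2
        simp [Set.indicator_apply, Set.mem_Ico, this.1, this.2]
      have h2 : ∀ e ∈ Finset.univ.filter (fun e => ¬ e ∈ cut St),
          G.w e * Set.indicator (Set.Ico ((B e)^2) ((A e)^2)) (fun _ => (1:ℝ)) t = 0 := by
        intro e he
        rw [Finset.mem_filter] at he
        have hnot : ¬ ((B e)^2 ≤ t ∧ t < (A e)^2) := fun hc => he.2 ((hcut t ht e).mpr hc)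
        rw [Set.indicator_apply]
        split
        · next hmem => exact absurd ⟨hmem.1, hmem.2⟩ hnot
        · ring
      rw [Finset.sum_congr rfl h1, Finset.sum_congr rfl h2, Finset.sum_const_zero, add_zero]
      apply Finset.sum_congr _ (fun _ _ => rfl)
      ext e; simp
    rw [hGsum, hFsum]
    have hStsupp : ∀ u ∈ St, 0 < h u := by
      intro u hu
      rw [hStdef, Finset.mem_filter] at hu
      by_contra hc
      push_neg at hc
      have h2 : t < (h u)^2 := hu.2
      have h0 : h u = 0 := le_antisymm hc (hh u)
      rw [h0] at h2
      norm_num at h2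
      linarith
    rcases lt_or_ge t M with htM | htM
    · have hmem : St ∈ F := by
        rw [hFdef, Finset.mem_filter, Finset.mem_powerset]
        constructor
        · intro u hu
          rw [hsuppdef, Finset.mem_filter]
          exact ⟨Finset.mem_univ u, hStsupp u hu⟩
        · exact ⟨u₀, by rw [hStdef, Finset.mem_filter]; exact ⟨Finset.mem_univ u₀, htM⟩⟩
      have hle := Finset.inf'_le (fun S => (∑ e ∈ cut S, G.w e) - θ * wS G S) hmem
      have hind : Set.indicator (Set.Ioo (0:ℝ) M) (fun _ => (1:ℝ)) t = 1 := by
        rw [Set.indicator_of_mem (Set.mem_Ioo.mpr ⟨ht, htM⟩)]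
      rw [hind]
      rw [← hδdef] at hle
      linarith
    · have hind : Set.indicator (Set.Ioo (0:ℝ) M) (fun _ => (1:ℝ)) t = 0 := by
        apply Set.indicator_of_notMem
        rw [Set.mem_Ioo]; push_neg; intro; linarith
      rw [hind, mul_zero, add_zero]
      rcases St.eq_empty_or_nonempty with hSe | hSne
      · rw [hSe]
        have : wS G (∅ : Finset V) = 0 := by simp [wS]
        rw [this, mul_zero]
        exact Finset.sum_nonneg fun e _ => G.w_nonneg e
      · exact le_of_lt (key St hSne hStsupp)
  -- integrate
  have hintG : IntegrableOn (fun t => ∑ u : V, vw G u * Set.indicator (Set.Iio ((h u)^2)) (fun _ => (1:ℝ)) t) (Set.Ioi (0:ℝ)) := by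
    apply MeasureTheory.integrable_finset_sum
    intro u _
    exact (indIio_int ((h u)^2)).const_mul _
  have hintI : IntegrableOn (fun t => Set.indicator (Set.Ioo (0:ℝ) M) (fun _ => (1:ℝ)) t) (Set.Ioi (0:ℝ)) := indIoo_int 0 M
  have hintF : IntegrableOn (fun t => ∑ e : E, G.w e * Set.indicator (Set.Ico ((B e)^2) ((A e)^2)) (fun _ => (1:ℝ)) t) (Set.Ioi (0:ℝ)) := by
    apply MeasureTheory.integrable_finset_sum
    intro e _
    exact (indIco_int ((B e)^2) ((A e)^2)).const_mul _
  have hintL : IntegrableOn (fun t =>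
      θ * (∑ u : V, vw G u * Set.indicator (Set.Iio ((h u)^2)) (fun _ => (1:ℝ)) t)
        + δ * Set.indicator (Set.Ioo (0:ℝ) M) (fun _ => (1:ℝ)) t) (Set.Ioi (0:ℝ)) :=
    (hintG.const_mul θ).add (hintI.const_mul δ)
  have hmono := MeasureTheory.setIntegral_mono_on hintL hintF measurableSet_Ioi key2
  have hIG : ∫ t in Set.Ioi (0:ℝ), (∑ u : V, vw G u * Set.indicator (Set.Iio ((h u)^2)) (fun _ => (1:ℝ)) t) = D := by
    rw [MeasureTheory.integral_finset_sum _ (fun u _ => (indIio_int ((h u)^2)).const_mul _)]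
    rw [hDdef]
    apply Finset.sum_congr rfl
    intro u _
    rw [MeasureTheory.integral_const_mul, indIio_val _ (sq_nonneg _)]
  have hII : ∫ t in Set.Ioi (0:ℝ), Set.indicator (Set.Ioo (0:ℝ) M) (fun _ => (1:ℝ)) t = M :=
    indIoo_val M (le_of_lt hM)
  have hIF : ∫ t in Set.Ioi (0:ℝ), (∑ e : E, G.w e * Set.indicator (Set.Ico ((B e)^2) ((A e)^2)) (fun _ => (1:ℝ)) t)
      ≤ ∑ e : E, G.w e * (max (A e - B e) 0 * (A e + B e)) := by
    rw [MeasureTheory.integral_finset_sum _ (fun e _ => (indIco_int ((B e)^2) ((A e)^2)).const_mul _)]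
    apply Finset.sum_le_sum
    intro e _
    rw [MeasureTheory.integral_const_mul]
    apply mul_le_mul_of_nonneg_left _ (G.w_nonneg e)
    refine le_trans (indIco_val ((B e)^2) ((A e)^2)) ?_
    -- max (A² - B²) 0 ≤ max (A - B) 0 * (A + B)
    rcases le_total (A e) (B e) with hab | hab
    · have h1 : (A e)^2 ≤ (B e)^2 := sq_le_sq_of_nonneg (hA0 e) hab
      rw [max_eq_right (by linarith), max_eq_right (by linarith), zero_mul]
    · rw [max_eq_left (by nlinarith [hA0 e, hB0 e]), max_eq_left (by linarith)]
      nlinarith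
  -- combine with the left side
  have hleft : ∫ t in Set.Ioi (0:ℝ),
      (θ * (∑ u : V, vw G u * Set.indicator (Set.Iio ((h u)^2)) (fun _ => (1:ℝ)) t)
        + δ * Set.indicator (Set.Ioo (0:ℝ) M) (fun _ => (1:ℝ)) t)
      = θ * D + δ * M := by
    rw [MeasureTheory.integral_add (hintG.const_mul θ) (hintI.const_mul δ),
      MeasureTheory.integral_const_mul, MeasureTheory.integral_const_mul, hIG, hII]
  rw [hleft] at hmono
  -- Cauchy-Schwarz
  have hCS : ∑ e : E, G.w e * (max (A e - B e) 0 * (A e + B e)) ≤ θ * D := by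
    have hQ : ∑ e : E, G.w e * (A e + B e)^2 ≤ 4 * D := by
      have h1 : ∀ e : E, G.w e * (A e + B e)^2 ≤ G.w e * (4 * ∑ u ∈ G.Tl e ∪ G.Hd e, (h u)^2) := by
        intro e
        apply mul_le_mul_of_nonneg_left _ (G.w_nonneg e)
        nlinarith [hA2 e, hB2 e, sq_nonneg (A e - B e)]
      refine le_trans (Finset.sum_le_sum fun e _ => h1 e) ?_
      rw [hDdef, vw_swap G (fun u => (h u)^2)]
      rw [Finset.mul_sum]
      apply le_of_eq
      apply Finset.sum_congr rfl
      intros; ring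
    have hcs2 : (∑ e : E, G.w e * (max (A e - B e) 0 * (A e + B e)))^2
        ≤ N * (∑ e : E, G.w e * (A e + B e)^2) := by
      have := Finset.sum_mul_sq_le_sq_mul_sq Finset.univ
        (fun e => Real.sqrt (G.w e) * max (A e - B e) 0)
        (fun e => Real.sqrt (G.w e) * (A e + B e))
      have he1 : ∀ e : E, (Real.sqrt (G.w e) * max (A e - B e) 0) * (Real.sqrt (G.w e) * (A e + B e))
          = G.w e * (max (A e - B e) 0 * (A e + B e)) := by
        intro e
        rw [show (Real.sqrt (G.w e) * max (A e - B e) 0) * (Real.sqrt (G.w e) * (A e + B e))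
            = (Real.sqrt (G.w e) * Real.sqrt (G.w e)) * (max (A e - B e) 0 * (A e + B e)) from by
          ring, Real.mul_self_sqrt (G.w_nonneg e)]
      have he2 : ∀ e : E, (Real.sqrt (G.w e) * max (A e - B e) 0)^2 = G.w e * (max (A e - B e) 0)^2 := by
        intro e
        rw [mul_pow, Real.sq_sqrt (G.w_nonneg e)]
      have he3 : ∀ e : E, (Real.sqrt (G.w e) * (A e + B e))^2 = G.w e * (A e + B e)^2 := by
        intro e
        rw [mul_pow, Real.sq_sqrt (G.w_nonneg e)]
      rw [Finset.sum_congr rfl (fun e _ => he1 e), Finset.sum_congr rfl (fun e _ => he2 e),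
        Finset.sum_congr rfl (fun e _ => he3 e)] at this
      exact this
    have hsum0 : 0 ≤ ∑ e : E, G.w e * (max (A e - B e) 0 * (A e + B e)) := by
      apply Finset.sum_nonneg
      intro e _
      apply mul_nonneg (G.w_nonneg e)
      apply mul_nonneg (le_max_right _ _)
      exact add_nonneg (hA0 e) (hB0 e)
    have hQ0 : 0 ≤ ∑ e : E, G.w e * (A e + B e)^2 :=
      Finset.sum_nonneg fun e _ => mul_nonneg (G.w_nonneg e) (sq_nonneg _)
    have h4 : (∑ e : E, G.w e * (max (A e - B e) 0 * (A e + B e)))^2 ≤ N * (4 * D) := by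
      refine le_trans hcs2 ?_
      exact mul_le_mul_of_nonneg_left hQ hN0
    have h5 : ∑ e : E, G.w e * (max (A e - B e) 0 * (A e + B e)) ≤ Real.sqrt (N * (4 * D)) :=
      Real.le_sqrt_of_sq_le h4
    have h6 : Real.sqrt (N * (4 * D)) = θ * D := by
      have hDne : D ≠ 0 := ne_of_gt hD
      have hsw : N * (4 * D) = (N / D) * (2 * D)^2 := by
        rw [div_mul_eq_mul_div, eq_div_iff hDne]; ring
      rw [hθdef, hsw, Real.sqrt_mul (by positivity), Real.sqrt_sq (by positivity)]
      ring
    rw [h6] at h5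
    exact h5
  linarith [mul_pos hδ hM, le_trans hmono (le_trans hIF hCS)]


lemma pos_sq_split (x : ℝ) : (max x 0)^2 + (max (-x) 0)^2 = x^2 := by
  rcases le_total x 0 with hx | hx
  · rw [max_eq_right hx, max_eq_left (by linarith)]; ring
  · rw [max_eq_left hx, max_eq_right (by linarith)]; ring

lemma core (G : DirHyp V E) (hpos : ∀ u : V, 0 < vw G u) (hV : (Finset.univ : Finset V).Nonempty)
    (f : V → ℝ) (hf0 : f ≠ 0) (hortho : (∑ u : V, vw G u * f u) = 0) :
    ∃ S : Finset V, S.Nonempty ∧ S ≠ Finset.univ ∧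
      wS G S ≤ wS G Finset.univ / 2 ∧ phi G S ≤ 2 * Real.sqrt (discRatio G f) := by
  have hW : 0 < wS G Finset.univ := Finset.sum_pos (fun u _ => hpos u) hV
  have hdenf : 0 < ∑ u : V, vw G u * (f u)^2 := by
    obtain ⟨u, hu⟩ := Function.ne_iff.mp hf0
    apply Finset.sum_pos'
    · intro v _; exact mul_nonneg (vw_nonneg G v) (sq_nonneg _)
    · refine ⟨u, Finset.mem_univ u, ?_⟩
      have h2 : (0:ℝ) < (f u)^2 := by
        have h3 : f u ≠ 0 := hu
        positivity
      exact mul_pos (hpos u) h2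
  -- median
  set vals := Finset.univ.image f with hvals
  have hvalsne : vals.Nonempty := hV.image f
  set C := vals.filter (fun y => wS G Finset.univ / 2 ≤ wS G (Finset.univ.filter (fun u => f u ≤ y))) with hC
  have hCne : C.Nonempty := by
    refine ⟨vals.max' hvalsne, ?_⟩
    rw [hC, Finset.mem_filter]
    refine ⟨vals.max'_mem hvalsne, ?_⟩
    have : Finset.univ.filter (fun u => f u ≤ vals.max' hvalsne) = Finset.univ := by
      apply Finset.filter_true_of_mem
      intro u _
      exact Finset.le_max' vals (f u) (Finset.mem_image_of_mem f (Finset.mem_univ u))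
    rw [this]
    linarith
  set c := C.min' hCne with hcdef
  have hcmem : c ∈ C := C.min'_mem hCne
  have hc1 : wS G Finset.univ / 2 ≤ wS G (Finset.univ.filter (fun u => f u ≤ c)) := by
    rw [hC, Finset.mem_filter] at hcmem
    exact hcmem.2
  have hplus : wS G (Finset.univ.filter (fun u => c < f u)) ≤ wS G Finset.univ / 2 := by
    have hsplit : wS G (Finset.univ.filter (fun u => f u ≤ c))
        + wS G (Finset.univ.filter (fun u => ¬ (f u ≤ c))) = wS G Finset.univ := by
      rw [wS, wS, wS]
      exact Finset.sum_filter_add_sum_filter_not _ _ _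
    have : Finset.univ.filter (fun u => ¬ (f u ≤ c)) = Finset.univ.filter (fun u => c < f u) := by
      apply Finset.filter_congr; intro u _; simp [not_le]
    rw [this] at hsplit
    linarith
  have hminus : wS G (Finset.univ.filter (fun u => f u < c)) ≤ wS G Finset.univ / 2 := by
    set P := Finset.univ.filter (fun u => f u < c) with hP
    rcases P.eq_empty_or_nonempty with hPe | hPne
    · rw [hPe]
      have : wS G (∅ : Finset V) = 0 := by simp [wS]
      rw [this]; linarith
    · set y := P.sup' hPne f with hy
      have hymem : y ∈ vals := by
        obtain ⟨u, hu, hequ⟩ := Finset.exists_mem_eq_sup' hPne f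
        rw [hy, hequ]
        exact Finset.mem_image_of_mem f (Finset.mem_univ u)
      have hyc : y < c := by
        obtain ⟨u, hu, hequ⟩ := Finset.exists_mem_eq_sup' hPne f
        rw [hy, hequ]
        rw [hP, Finset.mem_filter] at hu
        exact hu.2
      have hynot : y ∉ C := fun hyC => absurd (C.min'_le y hyC) (by rw [← hcdef]; linarith)
      rw [hC, Finset.mem_filter] at hynot
      push_neg at hynot
      have h2 := hynot hymem
      have hsub : P ⊆ Finset.univ.filter (fun u => f u ≤ y) := by
        intro u hu
        rw [Finset.mem_filter]
        refine ⟨Finset.mem_univ u, ?_⟩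
        rw [hy]
        exact Finset.le_sup' f hu
      have := wS_mono G hsub
      linarith
  -- g and its parts
  set g := fun u => f u - c with hg
  set gp := fun u => max (g u) 0 with hgp
  set gm := fun u => max (-(g u)) 0 with hgm
  have hgp0 : ∀ u, 0 ≤ gp u := fun u => le_max_right _ _
  have hgm0 : ∀ u, 0 ≤ gm u := fun u => le_max_right _ _
  set N := ∑ e : E, G.w e * (max (disc G g e) 0) ^ 2 with hN
  have hdiscg : ∀ e : E, disc G g e = disc G f e := by
    intro e
    rw [disc, disc, hg, sup'_shift, inf'_shift]
    ring
  have hNf : N = ∑ e : E, G.w e * (max (disc G f e) 0) ^ 2 := by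
    rw [hN]
    exact Finset.sum_congr rfl fun e _ => by rw [hdiscg e]
  set Dg := ∑ u : V, vw G u * (g u)^2 with hDgdef
  have hDg : Dg = (∑ u : V, vw G u * (f u)^2) + c^2 * wS G Finset.univ := by
    rw [hDgdef]
    have h1 : ∀ u : V, vw G u * (g u)^2
        = vw G u * (f u)^2 - 2*c*(vw G u * f u) + c^2 * vw G u := by
      intro u; rw [hg]; ring
    rw [Finset.sum_congr rfl fun u _ => h1 u]
    rw [Finset.sum_add_distrib, Finset.sum_sub_distrib, ← Finset.mul_sum, ← Finset.mul_sum,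
      hortho, wS]
    ring
  have hDgpos : 0 < Dg := by
    have : 0 ≤ c^2 * wS G Finset.univ := mul_nonneg (sq_nonneg c) (le_of_lt hW)
    rw [hDg]; linarith
  have hN0 : 0 ≤ N := Finset.sum_nonneg fun e _ => mul_nonneg (G.w_nonneg e) (sq_nonneg _)
  have hratio0 : N / Dg ≤ discRatio G f := by
    rw [discRatio, ← hNf]
    apply div_le_div_of_nonneg_left hN0 hdenf
    rw [hDg]
    have : 0 ≤ c^2 * wS G Finset.univ := mul_nonneg (sq_nonneg c) (le_of_lt hW)
    linarith
  set Ap := fun e : E => (G.Tl e).sup' (G.Tl_ne e) gp with hAp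
  set Bp := fun e : E => (G.Hd e).inf' (G.Hd_ne e) gp with hBp
  set Am := fun e : E => (G.Hd e).sup' (G.Hd_ne e) gm with hAm
  set Bm := fun e : E => (G.Tl e).inf' (G.Tl_ne e) gm with hBm
  set Np := ∑ e : E, G.w e * (max (Ap e - Bp e) 0) ^ 2 with hNp
  set Nm := ∑ e : E, G.w e * (max (Am e - Bm e) 0) ^ 2 with hNm
  set Dp := ∑ u : V, vw G u * (gp u)^2 with hDp
  set Dm := ∑ u : V, vw G u * (gm u)^2 with hDm
  have hDsplit : Dp + Dm = Dg := by
    rw [hDp, hDm, hDgdef, ← Finset.sum_add_distrib]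
    apply Finset.sum_congr rfl
    intro u _
    have h := pos_sq_split (g u)
    simp only [hgp, hgm]
    rw [← h]
    ring
  have hNsplit : Np + Nm ≤ N := by
    rw [hNp, hNm, hN, ← Finset.sum_add_distrib]
    apply Finset.sum_le_sum
    intro e _
    have hApe : Ap e = max ((G.Tl e).sup' (G.Tl_ne e) g) 0 := by
      rw [hAp, hgp]; exact sup'_pos_part _ g
    have hBpe : Bp e = max ((G.Hd e).inf' (G.Hd_ne e) g) 0 := by
      rw [hBp, hgp]; exact inf'_pos_part _ g
    have hAme : Am e = max (-((G.Hd e).inf' (G.Hd_ne e) g)) 0 := by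
      rw [hAm, hgm]; exact sup'_neg_part _ g
    have hBme : Bm e = max (-((G.Tl e).sup' (G.Tl_ne e) g)) 0 := by
      rw [hBm, hgm]; exact inf'_neg_part _ g
    rw [hApe, hBpe, hAme, hBme, ← mul_add]
    apply mul_le_mul_of_nonneg_left _ (G.w_nonneg e)
    rw [disc]
    exact split_sq _ _
  have hNp0 : 0 ≤ Np := Finset.sum_nonneg fun e _ => mul_nonneg (G.w_nonneg e) (sq_nonneg _)
  have hNm0 : 0 ≤ Nm := Finset.sum_nonneg fun e _ => mul_nonneg (G.w_nonneg e) (sq_nonneg _)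
  have hDp0 : 0 ≤ Dp := Finset.sum_nonneg fun u _ => mul_nonneg (vw_nonneg G u) (sq_nonneg _)
  have hDm0 : 0 ≤ Dm := Finset.sum_nonneg fun u _ => mul_nonneg (vw_nonneg G u) (sq_nonneg _)
  have hside : (0 < Dp ∧ Np / Dp ≤ N / Dg) ∨ (0 < Dm ∧ Nm / Dm ≤ N / Dg) := by
    rcases eq_or_lt_of_le hDp0 with hDpz | hDppos
    · right
      have hDmg : Dm = Dg := by linarith
      refine ⟨by linarith, ?_⟩
      rw [hDmg]
      exact (div_le_div_iff_of_pos_right hDgpos).mpr (by linarith)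
    · rcases eq_or_lt_of_le hDm0 with hDmz | hDmpos
      · left
        have hDpg : Dp = Dg := by linarith
        refine ⟨hDppos, ?_⟩
        rw [hDpg]
        exact (div_le_div_iff_of_pos_right hDgpos).mpr (by linarith)
      · rcases le_total (Np * Dm) (Nm * Dp) with hcmp | hcmp
        · left
          refine ⟨hDppos, ?_⟩
          have h1 : Np / Dp ≤ (Np + Nm) / (Dp + Dm) := by
            rw [div_le_div_iff₀ hDppos (by linarith)]
            nlinarith
          rw [hDsplit] at h1
          exact le_trans h1 ((div_le_div_iff_of_pos_right hDgpos).mpr hNsplit)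
        · right
          refine ⟨hDmpos, ?_⟩
          have h1 : Nm / Dm ≤ (Np + Nm) / (Dp + Dm) := by
            rw [div_le_div_iff₀ hDmpos (by linarith)]
            nlinarith
          rw [hDsplit] at h1
          exact le_trans h1 ((div_le_div_iff_of_pos_right hDgpos).mpr hNsplit)
  -- side-specific helpers
  have sq_mono : ∀ {a b : ℝ}, 0 ≤ a → a ≤ b → a^2 ≤ b^2 := fun ha hab => by nlinarith
  rcases hside with ⟨hDside, hrat⟩ | ⟨hDside, hrat⟩
  · -- plus side
    have hA0 : ∀ e, 0 ≤ Ap e := by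
      intro e
      obtain ⟨u, hu⟩ := G.Tl_ne e
      exact le_trans (hgp0 u) (Finset.le_sup' gp hu)
    have hB0 : ∀ e, 0 ≤ Bp e := by
      intro e
      exact Finset.le_inf' _ _ fun u _ => hgp0 u
    have hA2 : ∀ e, (Ap e)^2 ≤ ∑ u ∈ G.Tl e ∪ G.Hd e, (gp u)^2 := by
      intro e
      obtain ⟨u, hu, he⟩ := Finset.exists_mem_eq_sup' (G.Tl_ne e) gp
      have hApu : Ap e = gp u := by rw [hAp]; exact he
      rw [hApu]
      exact Finset.single_le_sum (f := fun u => (gp u)^2)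
        (fun v _ => sq_nonneg _) (Finset.mem_union_left _ hu)
    have hB2 : ∀ e, (Bp e)^2 ≤ ∑ u ∈ G.Tl e ∪ G.Hd e, (gp u)^2 := by
      intro e
      obtain ⟨v, hv, he⟩ := Finset.exists_mem_eq_inf' (G.Hd_ne e) gp
      have hBpv : Bp e = gp v := by rw [hBp]; exact he
      rw [hBpv]
      exact Finset.single_le_sum (f := fun u => (gp u)^2)
        (fun w _ => sq_nonneg _) (Finset.mem_union_right _ hv)
    have hcutp : ∀ t : ℝ, 0 < t → ∀ e : E,
        (e ∈ outCut G (Finset.univ.filter (fun u => t < (gp u)^2)) ↔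
          (Bp e)^2 ≤ t ∧ t < (Ap e)^2) := by
      intro t ht e
      rw [outCut, Finset.mem_filter]
      simp only [Finset.mem_univ, true_and]
      constructor
      · rintro ⟨⟨u, hu⟩, ⟨v, hv⟩⟩
        obtain ⟨hu1, hu2⟩ := Finset.mem_inter.mp hu
        obtain ⟨hv1, hv2⟩ := Finset.mem_inter.mp hv
        constructor
        · rw [Finset.mem_compl, Finset.mem_filter] at hv2
          have hv3 : ¬ t < (gp v)^2 := fun hc => hv2 ⟨Finset.mem_univ v, hc⟩
          push_neg at hv3
          have h1 : Bp e ≤ gp v := Finset.inf'_le gp hv1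
          have := sq_mono (hB0 e) h1
          linarith
        · have hu3 : t < (gp u)^2 := (Finset.mem_filter.mp hu2).2
          have h1 : gp u ≤ Ap e := Finset.le_sup' gp hu1
          have := sq_mono (hgp0 u) h1
          linarith
      · rintro ⟨h1, h2⟩
        constructor
        · obtain ⟨u, hu, he⟩ := Finset.exists_mem_eq_sup' (G.Tl_ne e) gp
          have hApu : Ap e = gp u := by rw [hAp]; exact he
          refine ⟨u, Finset.mem_inter.mpr ⟨hu, ?_⟩⟩
          rw [Finset.mem_filter]
          exact ⟨Finset.mem_univ u, by rw [hApu] at h2; exact h2⟩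
        · obtain ⟨v, hv, he⟩ := Finset.exists_mem_eq_inf' (G.Hd_ne e) gp
          have hBpv : Bp e = gp v := by rw [hBp]; exact he
          refine ⟨v, Finset.mem_inter.mpr ⟨hv, ?_⟩⟩
          rw [Finset.mem_compl, Finset.mem_filter]
          intro hc
          rw [hBpv] at h1
          linarith [hc.2]
    obtain ⟨S, hSne, hSpos, hScut⟩ :=
      sweep G gp hgp0 Ap Bp hA0 hB0 hA2 hB2 (outCut G) hcutp hDside
    have hSsub : S ⊆ Finset.univ.filter (fun u => c < f u) := by
      intro u hu
      rw [Finset.mem_filter]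
      refine ⟨Finset.mem_univ u, ?_⟩
      have h1 := hSpos u hu
      simp only [hgp] at h1
      have h2 : 0 < g u := by
        by_contra hcneg
        push_neg at hcneg
        rw [max_eq_right hcneg] at h1
        exact lt_irrefl 0 h1
      simp only [hg] at h2
      linarith
    have hwShalf : wS G S ≤ wS G Finset.univ / 2 := le_trans (wS_mono G hSsub) hplus
    have hSneuniv : S ≠ Finset.univ := by
      intro hc; rw [hc] at hwShalf; linarith
    have hwSpos : 0 < wS G S := Finset.sum_pos (fun u _ => hpos u) hSne
    refine ⟨S, hSne, hSneuniv, hwShalf, ?_⟩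
    have hphip : phiPlus G S ≤ 2 * Real.sqrt (Np / Dp) := by
      rw [phiPlus, div_le_iff₀ hwSpos]
      exact hScut
    refine le_trans (min_le_left _ _) (le_trans hphip ?_)
    apply mul_le_mul_of_nonneg_left _ (by norm_num : (0:ℝ) ≤ 2)
    exact Real.sqrt_le_sqrt (le_trans hrat hratio0)
  · -- minus side
    have hA0 : ∀ e, 0 ≤ Am e := by
      intro e
      obtain ⟨u, hu⟩ := G.Hd_ne e
      exact le_trans (hgm0 u) (Finset.le_sup' gm hu)
    have hB0 : ∀ e, 0 ≤ Bm e := by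
      intro e
      exact Finset.le_inf' _ _ fun u _ => hgm0 u
    have hA2 : ∀ e, (Am e)^2 ≤ ∑ u ∈ G.Tl e ∪ G.Hd e, (gm u)^2 := by
      intro e
      obtain ⟨u, hu, he⟩ := Finset.exists_mem_eq_sup' (G.Hd_ne e) gm
      have hAmu : Am e = gm u := by rw [hAm]; exact he
      rw [hAmu]
      exact Finset.single_le_sum (f := fun u => (gm u)^2)
        (fun v _ => sq_nonneg _) (Finset.mem_union_right _ hu)
    have hB2 : ∀ e, (Bm e)^2 ≤ ∑ u ∈ G.Tl e ∪ G.Hd e, (gm u)^2 := by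
      intro e
      obtain ⟨v, hv, he⟩ := Finset.exists_mem_eq_inf' (G.Tl_ne e) gm
      have hBmv : Bm e = gm v := by rw [hBm]; exact he
      rw [hBmv]
      exact Finset.single_le_sum (f := fun u => (gm u)^2)
        (fun w _ => sq_nonneg _) (Finset.mem_union_left _ hv)
    have hcutm : ∀ t : ℝ, 0 < t → ∀ e : E,
        (e ∈ inCut G (Finset.univ.filter (fun u => t < (gm u)^2)) ↔
          (Bm e)^2 ≤ t ∧ t < (Am e)^2) := by
      intro t ht e
      rw [inCut, Finset.mem_filter]
      simp only [Finset.mem_univ, true_and]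
      constructor
      · rintro ⟨⟨v, hv⟩, ⟨u, hu⟩⟩
        obtain ⟨hv1, hv2⟩ := Finset.mem_inter.mp hv
        obtain ⟨hu1, hu2⟩ := Finset.mem_inter.mp hu
        constructor
        · rw [Finset.mem_compl, Finset.mem_filter] at hv2
          have hv3 : ¬ t < (gm v)^2 := fun hc => hv2 ⟨Finset.mem_univ v, hc⟩
          push_neg at hv3
          have h1 : Bm e ≤ gm v := Finset.inf'_le gm hv1
          have := sq_mono (hB0 e) h1
          linarith
        · have hu3 : t < (gm u)^2 := (Finset.mem_filter.mp hu2).2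
          have h1 : gm u ≤ Am e := Finset.le_sup' gm hu1
          have := sq_mono (hgm0 u) h1
          linarith
      · rintro ⟨h1, h2⟩
        constructor
        · obtain ⟨v, hv, he⟩ := Finset.exists_mem_eq_inf' (G.Tl_ne e) gm
          have hBmv : Bm e = gm v := by rw [hBm]; exact he
          refine ⟨v, Finset.mem_inter.mpr ⟨hv, ?_⟩⟩
          rw [Finset.mem_compl, Finset.mem_filter]
          intro hc
          rw [hBmv] at h1
          linarith [hc.2]
        · obtain ⟨u, hu, he⟩ := Finset.exists_mem_eq_sup' (G.Hd_ne e) gm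
          have hAmu : Am e = gm u := by rw [hAm]; exact he
          refine ⟨u, Finset.mem_inter.mpr ⟨hu, ?_⟩⟩
          rw [Finset.mem_filter]
          exact ⟨Finset.mem_univ u, by rw [hAmu] at h2; exact h2⟩
    obtain ⟨S, hSne, hSpos, hScut⟩ :=
      sweep G gm hgm0 Am Bm hA0 hB0 hA2 hB2 (inCut G) hcutm hDside
    have hSsub : S ⊆ Finset.univ.filter (fun u => f u < c) := by
      intro u hu
      rw [Finset.mem_filter]
      refine ⟨Finset.mem_univ u, ?_⟩
      have h1 := hSpos u hu
      simp only [hgm] at h1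
      have h2 : 0 < -(g u) := by
        by_contra hcneg
        push_neg at hcneg
        rw [max_eq_right hcneg] at h1
        exact lt_irrefl 0 h1
      simp only [hg] at h2
      linarith
    have hwShalf : wS G S ≤ wS G Finset.univ / 2 := le_trans (wS_mono G hSsub) hminus
    have hSneuniv : S ≠ Finset.univ := by
      intro hc; rw [hc] at hwShalf; linarith
    have hwSpos : 0 < wS G S := Finset.sum_pos (fun u _ => hpos u) hSne
    refine ⟨S, hSne, hSneuniv, hwShalf, ?_⟩
    have hphim : phiMinus G S ≤ 2 * Real.sqrt (Nm / Dm) := by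
      rw [phiMinus, div_le_iff₀ hwSpos]
      exact hScut
    refine le_trans (min_le_right _ _) (le_trans hphim ?_)
    apply mul_le_mul_of_nonneg_left _ (by norm_num : (0:ℝ) ≤ 2)
    exact Real.sqrt_le_sqrt (le_trans hrat hratio0)


/-- Cheeger upper bound.
There is a nonempty proper `S ⊂ V` with `ω(S) ≤ ω(V)/2` and `φ(S) ≤ 2 √γ₂`;
in particular `φ_H ≤ 2 √γ₂`. -/
theorem cheeger_upper_bound (G : DirHyp V E) (hpos : ∀ u : V, 0 < vw G u)
    (hcard : 2 ≤ Fintype.card V) :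
    ∃ S : Finset V, S.Nonempty ∧ S ≠ Finset.univ ∧
      wS G S ≤ wS G Finset.univ / 2 ∧ phi G S ≤ 2 * Real.sqrt (gamma2 G) := by
  have hV : (Finset.univ : Finset V).Nonempty := by
    rw [← Finset.card_pos, Finset.card_univ]; omega
  -- a witness admissible function
  obtain ⟨u, v, huv⟩ := Fintype.exists_pair_of_one_lt_card (α := V) (by omega)
  set f₀ : V → ℝ := fun x => if x = u then vw G v else if x = v then -(vw G u) else 0 with hf₀
  have hf₀u : f₀ u = vw G v := by rw [hf₀]; simp
  have hf₀ne : f₀ ≠ 0 := by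
    intro hc
    have := congrFun hc u
    rw [hf₀u] at this
    exact absurd this (ne_of_gt (hpos v))
  have hf₀orth : (∑ x : V, vw G x * f₀ x) = 0 := by
    have hterm : ∀ x : V, vw G x * f₀ x
        = (if x = u then vw G u * vw G v else 0) + (if x = v then -(vw G v * vw G u) else 0) := by
      intro x
      rcases eq_or_ne x u with hx | hx
      · rw [hx, if_pos rfl, if_neg huv, hf₀u]
        ring
      · rcases eq_or_ne x v with hx2 | hx2
        · have hvf : f₀ v = -(vw G u) := by
            rw [hf₀]
            simp only [if_neg (show v ≠ u from fun h => huv h.symm), if_pos rfl]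
            simp
          rw [hx2, if_neg (show v ≠ u from fun h => huv h.symm), if_pos rfl, hvf]
          ring
        · have hxf : f₀ x = 0 := by
            rw [hf₀]
            simp only [if_neg hx, if_neg hx2]
          rw [hxf, if_neg hx, if_neg hx2]
          ring
    rw [Finset.sum_congr rfl fun x _ => hterm x, Finset.sum_add_distrib,
      Finset.sum_ite_eq' Finset.univ u, Finset.sum_ite_eq' Finset.univ v]
    simp only [Finset.mem_univ, if_pos]
    ring
  -- the admissible set is nonempty
  set Γ := {x : ℝ | ∃ f : V → ℝ, f ≠ 0 ∧ (∑ u : V, vw G u * f u) = 0 ∧ x = discRatio G f} with hΓ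
  have hΓne : Γ.Nonempty := ⟨discRatio G f₀, ⟨f₀, hf₀ne, hf₀orth, rfl⟩⟩
  -- minimizing S over the family
  set F := Finset.univ.powerset.filter (fun S : Finset V =>
    S.Nonempty ∧ S ≠ Finset.univ ∧ wS G S ≤ wS G Finset.univ / 2) with hF
  have hFne : F.Nonempty := by
    obtain ⟨S, h1, h2, h3, _⟩ := core G hpos hV f₀ hf₀ne hf₀orth
    exact ⟨S, by rw [hF, Finset.mem_filter, Finset.mem_powerset]; exact ⟨Finset.subset_univ S, h1, h2, h3⟩⟩
  obtain ⟨S₀, hS₀mem, hS₀min⟩ := F.exists_min_image (phi G) hFne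
  rw [hF, Finset.mem_filter, Finset.mem_powerset] at hS₀mem
  obtain ⟨_, hS₀ne, hS₀nu, hS₀half⟩ := hS₀mem
  refine ⟨S₀, hS₀ne, hS₀nu, hS₀half, ?_⟩
  -- phi S₀ ≤ 2 √x for all x in Γ
  have hbound : ∀ x ∈ Γ, phi G S₀ ≤ 2 * Real.sqrt x := by
    rintro x ⟨f, hf1, hf2, rfl⟩
    obtain ⟨S, h1, h2, h3, h4⟩ := core G hpos hV f hf1 hf2
    have hSF : S ∈ F := by
      rw [hF, Finset.mem_filter, Finset.mem_powerset]
      exact ⟨Finset.subset_univ S, h1, h2, h3⟩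
    exact le_trans (hS₀min S hSF) h4
  have hphi0 : 0 ≤ phi G S₀ := by
    have hwSpos : 0 < wS G S₀ := Finset.sum_pos (fun u _ => hpos u) hS₀ne
    rw [phi, le_min_iff]
    constructor
    · exact div_nonneg (Finset.sum_nonneg fun e _ => G.w_nonneg e) (le_of_lt hwSpos)
    · exact div_nonneg (Finset.sum_nonneg fun e _ => G.w_nonneg e) (le_of_lt hwSpos)
  have hlb : ∀ x ∈ Γ, (phi G S₀ / 2)^2 ≤ x := by
    rintro x hx
    obtain ⟨f, hf1, hf2, hxe⟩ := hx
    have hx0 : 0 ≤ x := by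
      rw [hxe, discRatio]
      apply div_nonneg (Finset.sum_nonneg fun e _ => mul_nonneg (G.w_nonneg e) (sq_nonneg _))
      exact Finset.sum_nonneg fun u _ => mul_nonneg (vw_nonneg G u) (sq_nonneg _)
    have h1 := hbound x (by exact ⟨f, hf1, hf2, hxe⟩)
    have h2 : phi G S₀ / 2 ≤ Real.sqrt x := by linarith
    calc (phi G S₀ / 2)^2 ≤ (Real.sqrt x)^2 := pow_le_pow_left₀ (by linarith) h2 2
      _ = x := Real.sq_sqrt hx0
  have hγ : (phi G S₀ / 2)^2 ≤ gamma2 G := by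
    rw [gamma2]
    exact le_csInf hΓne hlb
  have hfin : phi G S₀ / 2 ≤ Real.sqrt (gamma2 G) := Real.le_sqrt_of_sq_le hγ
  linarith
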